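/- Let i ∈ ℕ, let H be a graph on vertex set [k], let e be a pair of distinct vertices of [k], and let F be a core of H. Then F is in the (i,e)-boundary if and only if H is in the (i,e)-boundary. -/

import Mathlib

open Finset
open scoped Classical

namespace CliqueSA

variable {k : ℕ}

/-- `C` is a vertex cover of the graph `H` on `[k]`. -/
def IsVC (H : SimpleGraph (Fin k)) (C : Finset (Fin k)) : Prop :=
  ∀ ⦃u v : Fin k⦄, H.Adj u v → u ∈ C ∨ v ∈ C

/-- Minimum vertex cover size of a graph on `[k]`. -/
noncomputable def vc (H : SimpleGraph (Fin k)) : ℕ :=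
  sInf {m | ∃ C : Finset (Fin k), IsVC H C ∧ C.card = m}

/-- The edges of a graph on `[k]` as a `Finset`. -/
noncomputable def edgeF (H : SimpleGraph (Fin k)) : Finset (Sym2 (Fin k)) :=
  Finset.univ.filter (fun e => e ∈ H.edgeSet)

/-- Restriction of `H` to the vertex subset `B` (vertex-induced subgraph, on the vertex set `[k]`). -/
def restrict (H : SimpleGraph (Fin k)) (B : Finset (Fin k)) : SimpleGraph (Fin k) where
  Adj u v := H.Adj u v ∧ u ∈ B ∧ v ∈ B
  symm := by constructor; intro u v h; exact ⟨h.1.symm, h.2.2, h.2.1⟩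
  loopless := by constructor; intro u h; exact H.loopless.irrefl u h.1

/-- The non-isolated vertices `V(E(H))` of a graph on `[k]`. -/
noncomputable def suppF (H : SimpleGraph (Fin k)) : Finset (Fin k) :=
  Finset.univ.filter (fun v => v ∈ H.support)

/-- `W` is a minimum vertex cover of `H`. -/
def IsMinVC (H : SimpleGraph (Fin k)) (W : Finset (Fin k)) : Prop :=
  IsVC H W ∧ W.card = vc H

/-- There is a matching in `H` from `U` into `W` covering all of `U`. -/
def MatchableInto (H : SimpleGraph (Fin k)) (U W : Finset (Fin k)) : Prop :=
  ∃ f : Fin k → Fin k, Set.InjOn f ↑U ∧ ∀ u ∈ U, f u ∈ W ∧ H.Adj u (f u)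

/-- `U ⊆ Avail` is maximal (w.r.t. inclusion) with a matching in `H` from `U` into `W`
covering `U`. -/
def MaximalMatched (H : SimpleGraph (Fin k)) (W Avail U : Finset (Fin k)) : Prop :=
  U ⊆ Avail ∧ MatchableInto H U W ∧
    ∀ U', U ⊂ U' → U' ⊆ Avail → ¬ MatchableInto H U' W

/-- `F` is a core of `H`: a vertex-induced subgraph such that every minimum vertex cover of `F`
is a vertex cover of `H`. -/
def IsCore (F H : SimpleGraph (Fin k)) : Prop :=
  (∃ S : Finset (Fin k), F = restrict H S) ∧
    ∀ C : Finset (Fin k), IsVC F C → C.card = vc F → IsVC H C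

/-- `H` is in the `(i,e)`-boundary: `vc(H) = i` and `vc(H ∪ {e}) = i + 1`. -/
def InBoundary (i : ℕ) (H : SimpleGraph (Fin k)) (e : Sym2 (Fin k)) : Prop :=
  vc H = i ∧ vc (H ⊔ SimpleGraph.fromEdgeSet {e}) = i + 1

end CliqueSA

namespace CliqueSA

variable {k : ℕ}

lemma vc_le_card {H : SimpleGraph (Fin k)} {C : Finset (Fin k)} (h : IsVC H C) :
    vc H ≤ C.card := Nat.sInf_le ⟨C, h, rfl⟩

lemma exists_minVC (H : SimpleGraph (Fin k)) :
    ∃ C : Finset (Fin k), IsVC H C ∧ C.card = vc H :=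
  Nat.sInf_mem (⟨Finset.univ.card, ⟨Finset.univ, fun u _ _ => Or.inl (mem_univ u), rfl⟩⟩ :
    {m | ∃ C : Finset (Fin k), IsVC H C ∧ C.card = m}.Nonempty)

lemma vc_mono {G G' : SimpleGraph (Fin k)} (h : G ≤ G') : vc G ≤ vc G' := by
  obtain ⟨C, hC, hcard⟩ := exists_minVC G'
  calc vc G ≤ C.card := vc_le_card (fun a b hab => hC (h hab))
    _ = vc G' := hcard

lemma vc_sup_single_le (H : SimpleGraph (Fin k)) (u v : Fin k) :
    vc (H ⊔ SimpleGraph.fromEdgeSet {s(u, v)}) ≤ vc H + 1 := by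
  obtain ⟨C, hC, hcard⟩ := exists_minVC H
  have hvc : IsVC (H ⊔ SimpleGraph.fromEdgeSet {s(u, v)}) (insert u C) := by
    intro a b hab
    rcases hab with hab | hab
    · rcases hC hab with h | h
      · exact Or.inl (mem_insert_of_mem h)
      · exact Or.inr (mem_insert_of_mem h)
    · rw [SimpleGraph.fromEdgeSet_adj, Set.mem_singleton_iff, Sym2.eq_iff] at hab
      rcases hab.1 with ⟨ha, _⟩ | ⟨_, hb⟩
      · exact Or.inl (ha ▸ mem_insert_self u C)
      · exact Or.inr (hb ▸ mem_insert_self u C)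
  calc vc _ ≤ (insert u C).card := vc_le_card hvc
    _ ≤ C.card + 1 := card_insert_le _ _
    _ = vc H + 1 := by rw [hcard]

/-- Proposition `prop:core-boundary`: a core `F` of a graph `H` is in the
`(i,e)`-boundary if and only if `H` is. -/
theorem core_inBoundary_iff (k i : ℕ) (H F : SimpleGraph (Fin k)) (u v : Fin k) (huv : u ≠ v)
    (hcore : IsCore F H) :
    InBoundary i F s(u, v) ↔ InBoundary i H s(u, v) := by
  obtain ⟨⟨S, hS⟩, hmin⟩ := hcore
  have hFH : F ≤ H := by
    subst hS; intro a b hab; exact hab.1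
  have hvcFH : vc F = vc H := by
    refine le_antisymm (vc_mono hFH) ?_
    obtain ⟨C, hC, hcard⟩ := exists_minVC F
    calc vc H ≤ C.card := vc_le_card (hmin C hC hcard)
      _ = vc F := hcard
  have hsup : F ⊔ SimpleGraph.fromEdgeSet {s(u, v)} ≤
      H ⊔ SimpleGraph.fromEdgeSet {s(u, v)} := sup_le_sup_right hFH _
  constructor
  · rintro ⟨h1, h2⟩
    refine ⟨hvcFH ▸ h1, le_antisymm ?_ ?_⟩
    · calc vc _ ≤ vc H + 1 := vc_sup_single_le H u v
        _ = i + 1 := by rw [← hvcFH, h1]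
    · calc i + 1 = vc (F ⊔ SimpleGraph.fromEdgeSet {s(u, v)}) := h2.symm
        _ ≤ _ := vc_mono hsup
  · rintro ⟨h1, h2⟩
    have hvcF : vc F = i := hvcFH.trans h1
    refine ⟨hvcF, le_antisymm ?_ ?_⟩
    · calc vc _ ≤ vc F + 1 := vc_sup_single_le F u v
        _ = i + 1 := by rw [hvcF]
    · by_contra hlt
      push_neg at hlt
      obtain ⟨C, hC, hcard⟩ := exists_minVC (F ⊔ SimpleGraph.fromEdgeSet {s(u, v)})
      have hCF : IsVC F C := fun a b hab => hC (Or.inl hab)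
      have hle : vc F ≤ C.card := vc_le_card hCF
      have hcardF : C.card = vc F := by omega
      have hCH : IsVC H C := hmin C hCF hcardF
      have huv' : u ∈ C ∨ v ∈ C := by
        refine hC (Or.inr ?_)
        rw [SimpleGraph.fromEdgeSet_adj]
        exact ⟨rfl, huv⟩
      have hCHe : IsVC (H ⊔ SimpleGraph.fromEdgeSet {s(u, v)}) C := by
        intro a b hab
        rcases hab with hab | hab
        · exact hCH hab
        · rw [SimpleGraph.fromEdgeSet_adj, Set.mem_singleton_iff, Sym2.eq_iff] at hab
          rcases hab.1 with ⟨ha, hb⟩ | ⟨ha, hb⟩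
          · subst ha; subst hb; exact huv'
          · subst ha; subst hb; exact huv'.symm
      have := vc_le_card hCHe
      omega

end CliqueSA
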